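/- arXiv:2101.01323 — 4 statements merged into one kernel-verified Lean document; each statement's English description precedes it below -/
import Mathlib

section
/- Let H be a symmetric d×d real matrix, i ∈ {1,...,d}, and α ≥ 0 with α·|H_{ii}| < 1. Then the operator norm of the inverse of A = I − α e_i e_iᵀ H satisfies ‖A⁻¹‖ ≤ 1 + α‖H‖/(1 − α|H_{ii}|). -/
open Matrix
open scoped Matrix.Norms.L2Operator

theorem stmt_1 {d : ℕ} (H : Matrix (Fin d) (Fin d) ℝ) (hH : H.IsSymm)
    (i : Fin d) (α : ℝ) (hα0 : 0 ≤ α) (hα : α * |H i i| < 1) :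
    ‖((1 : Matrix (Fin d) (Fin d) ℝ) - α • (Matrix.single i i 1 * H))⁻¹‖ ≤
      1 + α * ‖H‖ / (1 - α * |H i i|) := by
  haveI : Nonempty (Fin d) := ⟨i⟩
  set E : Matrix (Fin d) (Fin d) ℝ := Matrix.single i i 1 with hE
  set M : Matrix (Fin d) (Fin d) ℝ := E * H with hMdef
  have habs : α * H i i ≤ α * |H i i| := by
    exact mul_le_mul_of_nonneg_left (le_abs_self _) hα0
  have hd : (0:ℝ) < 1 - α * |H i i| := by linarith
  have h1 : (0:ℝ) < 1 - α * H i i := by linarith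
  set c : ℝ := α / (1 - α * H i i) with hc
  have hc0 : 0 ≤ c := div_nonneg hα0 h1.le
  have hMe : ∀ j k, M j k = if j = i then H i k else 0 := by
    intro j k
    by_cases hj : j = i
    · subst hj; simp [hMdef, hE]
    · simp [hMdef, hE, Matrix.single_mul_apply_of_ne (1:ℝ) i i j k hj, hj]
  -- M * M = H i i • M
  have hM2 : M * M = H i i • M := by
    ext j k
    rw [Matrix.mul_apply]
    simp only [hMe, Matrix.smul_apply, smul_eq_mul]
    by_cases hj : j = i
    · simp [hj, ite_mul, Finset.sum_ite_eq, mul_comm]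
    · simp [hj]
  -- the inverse
  have hcoef : c - α - α * c * H i i = 0 := by
    have : c * (1 - α * H i i) = α := by
      rw [hc]; field_simp
    nlinarith [this]
  have hmul : ((1 : Matrix (Fin d) (Fin d) ℝ) - α • M) * (1 + c • M) = 1 := by
    have hMM : (α • M) * (c • M) = (α * c) • (M * M) := smul_mul_smul_comm α M c M
    have expand : ((1 : Matrix (Fin d) (Fin d) ℝ) - α • M) * (1 + c • M)
        = 1 + ((c - α - α * c * H i i) • M) := by
      simp only [sub_mul, mul_add, one_mul, mul_one]
      rw [hMM, hM2, smul_smul, sub_smul, sub_smul]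
      abel
    rw [expand, hcoef, zero_smul, add_zero]
  have hinv : ((1 : Matrix (Fin d) (Fin d) ℝ) - α • M)⁻¹ = 1 + c • M :=
    Matrix.inv_eq_right_inv hmul
  rw [hinv]
  -- norm bounds
  have hE2 : Eᴴ * E = E := by
    have hEH : Eᴴ = E := by
      ext a b
      simp [hE, Matrix.conjTranspose_apply, Matrix.single, and_comm]
    rw [hEH, hE, Matrix.single_mul_single_same, one_mul]
  have hnE : ‖E‖ ≤ 1 := by
    have := Matrix.l2_opNorm_conjTranspose_mul_self E
    rw [hE2] at this
    nlinarith [norm_nonneg E]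
  have hnM : ‖M‖ ≤ ‖H‖ := by
    calc ‖M‖ ≤ ‖E‖ * ‖H‖ := Matrix.l2_opNorm_mul E H
    _ ≤ 1 * ‖H‖ := by
        apply mul_le_mul_of_nonneg_right hnE (norm_nonneg _)
    _ = ‖H‖ := one_mul _
  have hnorm1 : ‖(1 : Matrix (Fin d) (Fin d) ℝ)‖ = 1 := norm_one
  calc ‖(1 : Matrix (Fin d) (Fin d) ℝ) + c • M‖
      ≤ ‖(1 : Matrix (Fin d) (Fin d) ℝ)‖ + ‖c • M‖ := norm_add_le _ _
    _ = 1 + c * ‖M‖ := by rw [hnorm1, norm_smul, Real.norm_eq_abs, abs_of_nonneg hc0]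
    _ ≤ 1 + α * ‖H‖ / (1 - α * |H i i|) := by
        apply add_le_add_right
        rw [hc, div_mul_eq_mul_div]
        apply div_le_div₀ (by positivity)
          (mul_le_mul_of_nonneg_left hnM hα0) hd (by linarith)
end

section
/- Let H be a symmetric d×d matrix, let m ≥ d, let stepsizes α_0,...,α_{m−1} ∈ [α_min, α_max] with 0 < α_min ≤ α_max, and let coordinates i_0,...,i_{m−1} ∈ {1,...,d} be such that {i_0,...,i_{m−1}} = {1,...,d}. Let 0 < δ ≤ min{ 1/(2m), α_min σ_min(H) / (2√m (m α_max σ_max(H) + 1)) }, where σ_min(H) and σ_max(H) are the smallest and largest positive singular values of H. If 0 ≠ y_0 ∈ range(H) and y_{t+1} = y_t − α_t e_{i_t} e_{i_t}ᵀ H y_t for t = 0,...,m−1, then there exists T ∈ {0,...,m−1} such that α_T |e_{i_T}ᵀ H y_T| ≥ δ ‖y_T‖. -/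
open Matrix

/-- The Euclidean norm of a vector in `Fin d → ℝ`. -/
noncomputable def eNorm {d : ℕ} (v : Fin d → ℝ) : ℝ := Real.sqrt (∑ j, v j ^ 2)

section helpers

variable {d : ℕ}

lemma eNorm_eq_norm (v : Fin d → ℝ) :
    eNorm v = ‖(WithLp.equiv 2 (Fin d → ℝ)).symm v‖ := by
  rw [EuclideanSpace.norm_eq]
  simp [eNorm, PiLp.toLp_apply, sq_abs]

lemma eNorm_add_le (u v : Fin d → ℝ) : eNorm (u + v) ≤ eNorm u + eNorm v := by
  simp only [eNorm_eq_norm]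
  exact norm_add_le _ _

lemma eNorm_nonneg (v : Fin d → ℝ) : 0 ≤ eNorm v := Real.sqrt_nonneg _

lemma eNorm_zero : eNorm (0 : Fin d → ℝ) = 0 := by simp [eNorm]

lemma eNorm_neg (v : Fin d → ℝ) : eNorm (-v) = eNorm v := by
  unfold eNorm; congr 1; exact Finset.sum_congr rfl fun j _ => by simp

lemma eNorm_pos {v : Fin d → ℝ} (hv : v ≠ 0) : 0 < eNorm v := by
  obtain ⟨j, hj⟩ : ∃ j, v j ≠ 0 := by
    by_contra h; push_neg at h; exact hv (funext h)
  exact Real.sqrt_pos.mpr (Finset.sum_pos' (fun k _ => sq_nonneg _)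
    ⟨j, Finset.mem_univ j, by positivity⟩)

lemma abs_le_eNorm (v : Fin d → ℝ) (j : Fin d) : |v j| ≤ eNorm v := by
  rw [← Real.sqrt_sq_eq_abs]
  exact Real.sqrt_le_sqrt (Finset.single_le_sum (fun k _ => sq_nonneg (v k)) (Finset.mem_univ j))

lemma eNorm_single (ii : Fin d) (a : ℝ) :
    eNorm (fun k => if k = ii then a else 0) = |a| := by
  unfold eNorm
  have : ∀ j : Fin d, (if j = ii then a else 0) ^ 2 = if j = ii then a ^ 2 else 0 := by
    intro j; by_cases h : j = ii <;> simp [h]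
  rw [Finset.sum_congr rfl (fun j _ => this j), Finset.sum_ite_eq' Finset.univ ii (fun _ => a ^ 2)]
  simp [Real.sqrt_sq_eq_abs]

lemma step_formula (H : Matrix (Fin d) (Fin d) ℝ) (a : ℝ) (ii : Fin d) (v : Fin d → ℝ) :
    (((1 : Matrix (Fin d) (Fin d) ℝ) - a • (Matrix.single ii ii 1 * H)) *ᵥ v)
      = fun k => v k - (if k = ii then a * (H *ᵥ v) ii else 0) := by
  funext k
  rw [sub_mulVec, Matrix.smul_mulVec, one_mulVec, ← mulVec_mulVec]
  simp only [Pi.sub_apply, Pi.smul_apply, smul_eq_mul]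
  congr 1
  rw [mulVec, dotProduct]
  simp only [single, Matrix.of_apply, ite_and, boole_mul, ite_mul, one_mul, zero_mul]
  by_cases h : k = ii
  · simp [h]
  · simp [eq_comm, h]

end helpers

section spectral

variable {d : ℕ} {H : Matrix (Fin d) (Fin d) ℝ}

/-- coefficient of `v` along the `j`-th eigenvector of `H` -/
noncomputable def coeff (hH : H.IsHermitian) (v : Fin d → ℝ) (j : Fin d) : ℝ :=
  (fun k => hH.eigenvectorBasis j k) ⬝ᵥ v

lemma inner_eq_coeff (hH : H.IsHermitian) (v : Fin d → ℝ) (j : Fin d) :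
    (inner ℝ (hH.eigenvectorBasis j) ((WithLp.equiv 2 (Fin d → ℝ)).symm v) : ℝ)
      = coeff hH v j := by
  simp [PiLp.inner_apply, RCLike.inner_apply, PiLp.toLp_apply, coeff, dotProduct, mul_comm]

lemma sum_sq_coeff (hH : H.IsHermitian) (v : Fin d → ℝ) :
    ∑ j, (coeff hH v j) ^ 2 = ∑ j, v j ^ 2 := by
  have h := (hH.eigenvectorBasis).sum_inner_mul_inner
      ((WithLp.equiv 2 (Fin d → ℝ)).symm v) ((WithLp.equiv 2 (Fin d → ℝ)).symm v)
  have h2 : ∀ j, (inner ℝ ((WithLp.equiv 2 (Fin d → ℝ)).symm v) (hH.eigenvectorBasis j) : ℝ)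
      = coeff hH v j := by
    intro j; rw [real_inner_comm]; exact inner_eq_coeff hH v j
  simp only [h2, inner_eq_coeff hH v] at h
  have h3 : (inner ℝ ((WithLp.equiv 2 (Fin d → ℝ)).symm v) ((WithLp.equiv 2 (Fin d → ℝ)).symm v) : ℝ)
      = ∑ k, v k ^ 2 := by
    rw [PiLp.inner_apply]; simp [RCLike.inner_apply, PiLp.toLp_apply, sq]
  rw [h3] at h
  simpa [sq] using h

lemma coeff_mulVec (hH : H.IsHermitian) (v : Fin d → ℝ) (j : Fin d) :
    coeff hH (H *ᵥ v) j = hH.eigenvalues j * coeff hH v j := by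
  have hsym : Hᵀ = H := by
    rw [← conjTranspose_eq_transpose_of_trivial]; exact hH
  unfold coeff
  rw [dotProduct_mulVec, ← mulVec_transpose, hsym]
  have := hH.mulVec_eigenvectorBasis j
  rw [show (H *ᵥ fun k => hH.eigenvectorBasis j k)
      = hH.eigenvalues j • fun k => hH.eigenvectorBasis j k from this]
  rw [smul_dotProduct]
  rfl

lemma sum_sq_mulVec (hH : H.IsHermitian) (v : Fin d → ℝ) :
    ∑ j, (H *ᵥ v) j ^ 2 = ∑ j, (hH.eigenvalues j) ^ 2 * (coeff hH v j) ^ 2 := by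
  rw [← sum_sq_coeff hH (H *ᵥ v)]
  simp [coeff_mulVec, mul_pow]

lemma eNorm_mulVec_le (hH : H.IsHermitian)
    {σmax : ℝ} (hσ : 0 ≤ σmax) (hub : ∀ j, (hH.eigenvalues j) ^ 2 ≤ σmax ^ 2)
    (v : Fin d → ℝ) : eNorm (H *ᵥ v) ≤ σmax * eNorm v := by
  unfold eNorm
  have h1 : ∑ j, (H *ᵥ v) j ^ 2 ≤ σmax ^ 2 * ∑ j, v j ^ 2 := by
    rw [sum_sq_mulVec hH, ← sum_sq_coeff hH v, Finset.mul_sum]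
    exact Finset.sum_le_sum fun j _ => mul_le_mul_of_nonneg_right (hub j) (sq_nonneg _)
  calc Real.sqrt (∑ j, (H *ᵥ v) j ^ 2) ≤ Real.sqrt (σmax ^ 2 * ∑ j, v j ^ 2) :=
        Real.sqrt_le_sqrt h1
    _ = σmax * Real.sqrt (∑ j, v j ^ 2) := by
        rw [Real.sqrt_mul (sq_nonneg _), Real.sqrt_sq hσ]

lemma eNorm_mulVec_ge (hH : H.IsHermitian)
    {σmin : ℝ} (hσ : 0 ≤ σmin)
    (hlb : ∀ j, σmin ^ 2 * (hH.eigenvalues j) ^ 2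
      ≤ (hH.eigenvalues j) ^ 2 * (hH.eigenvalues j) ^ 2)
    (z : Fin d → ℝ) : σmin * eNorm (H *ᵥ z) ≤ eNorm (H *ᵥ (H *ᵥ z)) := by
  unfold eNorm
  have h1 : σmin ^ 2 * ∑ j, (H *ᵥ z) j ^ 2 ≤ ∑ j, (H *ᵥ (H *ᵥ z)) j ^ 2 := by
    rw [sum_sq_mulVec hH (H *ᵥ z), sum_sq_mulVec hH z, Finset.mul_sum]
    refine Finset.sum_le_sum fun j _ => ?_
    rw [coeff_mulVec, mul_pow]
    calc σmin ^ 2 * ((hH.eigenvalues j) ^ 2 * (coeff hH z j) ^ 2)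
        = (σmin ^ 2 * (hH.eigenvalues j) ^ 2) * (coeff hH z j) ^ 2 := by ring
      _ ≤ ((hH.eigenvalues j) ^ 2 * (hH.eigenvalues j) ^ 2) * (coeff hH z j) ^ 2 :=
          mul_le_mul_of_nonneg_right (hlb j) (sq_nonneg _)
      _ = (hH.eigenvalues j) ^ 2 * ((hH.eigenvalues j) ^ 2 * (coeff hH z j) ^ 2) := by ring
  calc σmin * Real.sqrt (∑ j, (H *ᵥ z) j ^ 2)
      = Real.sqrt (σmin ^ 2 * ∑ j, (H *ᵥ z) j ^ 2) := by
        rw [Real.sqrt_mul (sq_nonneg _), Real.sqrt_sq hσ]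
    _ ≤ _ := Real.sqrt_le_sqrt h1

end spectral

set_option maxHeartbeats 1000000 in
theorem stmt_3 {d m : ℕ} (hm : d ≤ m)
    (H : Matrix (Fin d) (Fin d) ℝ) (hH : H.IsHermitian)
    (σmin σmax : ℝ)
    (hσmin : IsLeast {s : ℝ | 0 < s ∧ ∃ j, |hH.eigenvalues j| = s} σmin)
    (hσmax : IsGreatest {s : ℝ | 0 < s ∧ ∃ j, |hH.eigenvalues j| = s} σmax)
    (αmin αmax : ℝ) (hαmin : 0 < αmin) (hαle : αmin ≤ αmax)
    (α : ℕ → ℝ) (hα : ∀ t, t < m → α t ∈ Set.Icc αmin αmax)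
    (i : ℕ → Fin d) (hcover : ∀ j : Fin d, ∃ t, t < m ∧ i t = j)
    (δ : ℝ) (hδ0 : 0 < δ)
    (hδ : δ ≤ min (1 / (2 * (m : ℝ)))
      (αmin * σmin / (2 * Real.sqrt m * (m * αmax * σmax + 1))))
    (y : ℕ → Fin d → ℝ) (hy0ne : y 0 ≠ 0) (hy0ran : ∃ z, y 0 = H *ᵥ z)
    (hrec : ∀ t, t < m →
      y (t + 1) = ((1 : Matrix (Fin d) (Fin d) ℝ)
        - α t • (Matrix.single (i t) (i t) 1 * H)) *ᵥ y t) :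
    ∃ T, T < m ∧ δ * eNorm (y T) ≤ α T * |(H *ᵥ y T) (i T)| := by
  by_contra hcon
  push_neg at hcon
  have hd : 0 < d := by
    rcases Nat.eq_zero_or_pos d with h | h
    · subst h; exact absurd (funext fun j => absurd j.isLt (by omega)) hy0ne
    · exact h
  have hm0 : 0 < m := lt_of_lt_of_le hd hm
  have hσmin0 : 0 < σmin := hσmin.1.1
  have hσmax0 : 0 < σmax := hσmax.1.1
  have hαmax : 0 < αmax := lt_of_lt_of_le hαmin hαle
  have hN : 0 < eNorm (y 0) := eNorm_pos hy0ne
  set N := eNorm (y 0) with hNdef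
  have hδ1 : 2 * (m : ℝ) * δ ≤ 1 := by
    have h2m : (0 : ℝ) < 2 * m := by positivity
    have h := le_trans hδ (min_le_left _ _)
    rw [le_div_iff₀ h2m] at h
    nlinarith [h]
  -- eigenvalue bounds
  have hub : ∀ j, (hH.eigenvalues j) ^ 2 ≤ σmax ^ 2 := by
    intro j
    rcases eq_or_ne (hH.eigenvalues j) 0 with h | h
    · rw [h]; simpa using sq_nonneg σmax
    · have hle := hσmax.2 ⟨abs_pos.mpr h, j, rfl⟩
      calc (hH.eigenvalues j) ^ 2 = |hH.eigenvalues j| ^ 2 := (sq_abs _).symm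
        _ ≤ σmax ^ 2 := pow_le_pow_left₀ (abs_nonneg _) hle 2
  have hlb : ∀ j, σmin ^ 2 * (hH.eigenvalues j) ^ 2
      ≤ (hH.eigenvalues j) ^ 2 * (hH.eigenvalues j) ^ 2 := by
    intro j
    rcases eq_or_ne (hH.eigenvalues j) 0 with h | h
    · simp [h]
    · have hle := hσmin.2 ⟨abs_pos.mpr h, j, rfl⟩
      have hsq : σmin ^ 2 ≤ (hH.eigenvalues j) ^ 2 := by
        calc σmin ^ 2 ≤ |hH.eigenvalues j| ^ 2 := pow_le_pow_left₀ hσmin0.le hle 2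
          _ = _ := sq_abs _
      exact mul_le_mul_of_nonneg_right hsq (sq_nonneg _)
  -- step size of the recursion
  have hαt : ∀ t, t < m →
      eNorm (y (t + 1) - y t) = α t * |(H *ᵥ y t) (i t)| := by
    intro t ht
    have hform : y (t + 1) - y t
        = fun k => (if k = i t then -(α t * (H *ᵥ y t) (i t)) else 0) := by
      funext k
      rw [Pi.sub_apply, hrec t ht, step_formula]
      by_cases h : k = i t <;> simp [h]
    rw [hform, eNorm_single, abs_neg, abs_mul,
      abs_of_pos (lt_of_lt_of_le hαmin (hα t ht).1)]
  -- deviation bound by induction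
  have hdev : ∀ t, t ≤ m →
      eNorm (y t - y 0) ≤ 2 * t * δ * N ∧ eNorm (y t) ≤ 2 * N := by
    intro t
    induction t with
    | zero =>
      intro _
      refine ⟨by simp [sub_self, eNorm_zero], ?_⟩
      linarith
    | succ t ih =>
      intro ht
      have ht' : t < m := ht
      obtain ⟨ih1, ih2⟩ := ih ht'.le
      have hstep : eNorm (y (t + 1) - y t) < 2 * δ * N := by
        rw [hαt t ht']
        calc α t * |(H *ᵥ y t) (i t)| < δ * eNorm (y t) := hcon t ht'
          _ ≤ δ * (2 * N) := mul_le_mul_of_nonneg_left ih2 hδ0.le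
          _ = 2 * δ * N := by ring
      have htri : eNorm (y (t + 1) - y 0)
          ≤ eNorm (y (t + 1) - y t) + eNorm (y t - y 0) := by
        have heq : y (t + 1) - y 0 = (y (t + 1) - y t) + (y t - y 0) := by
          funext k; simp
        rw [heq]; exact eNorm_add_le _ _
      have h1 : eNorm (y (t + 1) - y 0) ≤ 2 * ((t : ℝ) + 1) * δ * N := by
        nlinarith [htri, hstep, ih1]
      constructor
      · push_cast
        exact h1
      · have htri2 : eNorm (y (t + 1)) ≤ N + eNorm (y (t + 1) - y 0) := by
          have heq : y (t + 1) = y 0 + (y (t + 1) - y 0) := by funext k; simp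
        
          calc eNorm (y (t + 1)) = eNorm (y 0 + (y (t + 1) - y 0)) := by rw [← heq]
            _ ≤ N + eNorm (y (t + 1) - y 0) := eNorm_add_le _ _
        have hts : (t : ℝ) + 1 ≤ m := by exact_mod_cast ht
        have e0 : ((t : ℝ) + 1) * δ ≤ (m : ℝ) * δ := mul_le_mul_of_nonneg_right hts hδ0.le
        have e3 : 2 * ((t : ℝ) + 1) * δ * N ≤ N := by nlinarith [hN.le, hδ1]
        linarith [h1, htri2, e3]
  -- lower bound via range
  obtain ⟨z, hz⟩ := hy0ran
  have hlow : σmin * N ≤ eNorm (H *ᵥ y 0) := by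
    rw [hNdef, hz]
    exact eNorm_mulVec_ge hH hσmin0.le hlb z
  set C : ℝ := 2 * δ * N / αmin + 2 * m * δ * σmax * N with hC
  have hCpos : 0 < C := by positivity
  -- each coordinate of H y₀ is small
  have hkeyj : ∀ j : Fin d, |(H *ᵥ y 0) j| < C := by
    intro j
    obtain ⟨t, ht, hit⟩ := hcover j
    obtain ⟨hd1, hd2⟩ := hdev t ht.le
    have hsplit : (H *ᵥ y 0) j = (H *ᵥ (y 0 - y t)) j + (H *ᵥ y t) j := by
      rw [mulVec_sub]; simp
    have h1 : |(H *ᵥ (y 0 - y t)) j| ≤ σmax * (2 * m * δ * N) := by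
      calc |(H *ᵥ (y 0 - y t)) j| ≤ eNorm (H *ᵥ (y 0 - y t)) := abs_le_eNorm _ j
        _ ≤ σmax * eNorm (y 0 - y t) := eNorm_mulVec_le hH hσmax0.le hub _
        _ ≤ σmax * (2 * m * δ * N) := by
            have heq : eNorm (y 0 - y t) = eNorm (y t - y 0) := by
              rw [show y 0 - y t = -(y t - y 0) by ring, eNorm_neg]
            have htm : (t : ℝ) ≤ m := by exact_mod_cast ht.le
            rw [heq]
            have e0 : (t : ℝ) * δ ≤ (m : ℝ) * δ := mul_le_mul_of_nonneg_right htm hδ0.le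
            have : eNorm (y t - y 0) ≤ 2 * (m : ℝ) * δ * N := by
              nlinarith [hd1, hN.le, e0]
            nlinarith [hσmax0.le]
    have h2 : |(H *ᵥ y t) j| < 2 * δ * N / αmin := by
      rw [← hit]
      have hc := hcon t ht
      rw [lt_div_iff₀ hαmin]
      have habs := abs_nonneg ((H *ᵥ y t) (i t))
      calc |(H *ᵥ y t) (i t)| * αmin = αmin * |(H *ᵥ y t) (i t)| := mul_comm _ _
        _ ≤ α t * |(H *ᵥ y t) (i t)| := mul_le_mul_of_nonneg_right (hα t ht).1 habs
        _ < δ * eNorm (y t) := hc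
        _ ≤ δ * (2 * N) := mul_le_mul_of_nonneg_left hd2 hδ0.le
        _ = 2 * δ * N := by ring
    calc |(H *ᵥ y 0) j| ≤ |(H *ᵥ (y 0 - y t)) j| + |(H *ᵥ y t) j| := by
          rw [hsplit]; exact abs_add_le _ _
      _ < σmax * (2 * m * δ * N) + 2 * δ * N / αmin := by linarith
      _ = C := by rw [hC]; ring
  -- upper bound on the norm of H y₀
  haveI : Nonempty (Fin d) := Fin.pos_iff_nonempty.mp hd
  have hsum : ∑ j, (H *ᵥ y 0) j ^ 2 < d * C ^ 2 := by
    calc ∑ j, (H *ᵥ y 0) j ^ 2 < ∑ _j : Fin d, C ^ 2 := by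
          apply Finset.sum_lt_sum_of_nonempty Finset.univ_nonempty
          intro j _
          have hj := hkeyj j
          calc (H *ᵥ y 0) j ^ 2 = |(H *ᵥ y 0) j| ^ 2 := (sq_abs _).symm
            _ < C ^ 2 := by nlinarith [abs_nonneg ((H *ᵥ y 0) j)]
      _ = d * C ^ 2 := by
          simp [Finset.sum_const, Finset.card_fin, nsmul_eq_mul]
  have hup : eNorm (H *ᵥ y 0) < Real.sqrt d * C := by
    calc eNorm (H *ᵥ y 0) = Real.sqrt (∑ j, (H *ᵥ y 0) j ^ 2) := rfl
      _ < Real.sqrt (d * C ^ 2) :=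
          Real.sqrt_lt_sqrt (Finset.sum_nonneg fun j _ => sq_nonneg _) hsum
      _ = Real.sqrt d * C := by
          rw [Real.sqrt_mul (Nat.cast_nonneg d), Real.sqrt_sq hCpos.le]
  have hdm : Real.sqrt d ≤ Real.sqrt m := Real.sqrt_le_sqrt (by exact_mod_cast hm)
  have hsm : 0 < Real.sqrt m := Real.sqrt_pos.mpr (by exact_mod_cast hm0)
  -- final rearrangement
  have hkey2 : 2 * Real.sqrt m * δ * ((m : ℝ) * αmax * σmax + 1) ≤ αmin * σmin := by
    have hden : (0 : ℝ) < 2 * Real.sqrt m * ((m : ℝ) * αmax * σmax + 1) := by positivity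
    have h := le_trans hδ (min_le_right _ _)
    rw [le_div_iff₀ hden] at h
    nlinarith [h]
  have hfinal : Real.sqrt m * C ≤ σmin * N := by
    have hCα : C * αmin = 2 * δ * N + 2 * m * δ * σmax * N * αmin := by
      rw [hC]; field_simp
    have hmulled : Real.sqrt m * C * αmin ≤ σmin * N * αmin := by
      have e1 := mul_le_mul_of_nonneg_right hkey2 hN.le
      have e2 : αmin * (2 * Real.sqrt m * δ * (m : ℝ) * σmax * N)
          ≤ αmax * (2 * Real.sqrt m * δ * (m : ℝ) * σmax * N) :=
        mul_le_mul_of_nonneg_right hαle (by positivity)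
      calc Real.sqrt m * C * αmin = Real.sqrt m * (C * αmin) := by ring
        _ = Real.sqrt m * (2 * δ * N) + Real.sqrt m * (2 * m * δ * σmax * N * αmin) := by
            rw [hCα]; ring
        _ ≤ σmin * N * αmin := by nlinarith [e1, e2]
    exact le_of_mul_le_mul_right hmulled hαmin
  have : σmin * N < σmin * N :=
    calc σmin * N ≤ eNorm (H *ᵥ y 0) := hlow
      _ < Real.sqrt d * C := hup
      _ ≤ Real.sqrt m * C := mul_le_mul_of_nonneg_right hdm hCpos.le
      _ ≤ σmin * N := hfinal
  exact absurd this (lt_irrefl _)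
end

section
/- Let H be a symmetric d×d matrix with λ_min(H) < 0, let m ≥ d, and suppose 0 < α_min ≤ α_max with α_max |H_{jj}| < 1 for all j. Then there exists c ∈ (0,1), depending only on m, H, α_min, α_max, such that for any sequence x_{t+1} = (I − α_t e_{i_t} e_{i_t}ᵀ H) x_t with α_t ∈ [α_min, α_max], if f^H(x_0) < 0 and {i_0,...,i_{m−1}} = {1,...,d}, then f^H(x_m) − f^H(x_0) ≤ c·f^H(x_0), i.e., f^H(x_m) ≤ (1+c) f^H(x_0). -/
open Matrix

lemma specPSD {d : ℕ} (H : Matrix (Fin d) (Fin d) ℝ) (hH : H.IsHermitian)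
    (μ : ℝ) (hμ : ∀ k, 0 ≤ μ * hH.eigenvalues k + hH.eigenvalues k * hH.eigenvalues k)
    (y : Fin d → ℝ) :
    0 ≤ μ * (y ⬝ᵥ (H *ᵥ y)) + (H *ᵥ y) ⬝ᵥ (H *ᵥ y) := by
  set U : Matrix (Fin d) (Fin d) ℝ := (hH.eigenvectorUnitary : Matrix (Fin d) (Fin d) ℝ) with hU
  set lam : Fin d → ℝ := hH.eigenvalues
  have hspec : H = U * diagonal lam * star U := by
    have := hH.spectral_theorem
    simpa [hU] using this
  have hsU : star U * U = 1 := Unitary.coe_star_mul_self hH.eigenvectorUnitary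
  have hP : (μ • H + H * H) = U * diagonal (fun k => μ * lam k + lam k * lam k) * star U := by
    rw [hspec]
    simp only [Matrix.mul_assoc]
    have h1 : diagonal lam * (star U * (U * (diagonal lam * star U)))
        = diagonal (fun k => lam k * lam k) * star U := by
      rw [← Matrix.mul_assoc (star U), hsU, Matrix.one_mul, ← Matrix.mul_assoc,
        diagonal_mul_diagonal]
    rw [h1]
    have h2 : μ • (U * (diagonal lam * star U)) = U * ((μ • diagonal lam) * star U) := by
      simp [Matrix.smul_mul, Matrix.mul_smul]
    rw [h2, ← Matrix.mul_add, ← Matrix.add_mul]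
    congr 2
    ext j k
    by_cases h : j = k <;> simp [diagonal, h, mul_comm]
  have hpsd : (μ • H + H * H).PosSemidef := by
    rw [hP]
    exact (posSemidef_diagonal_iff.mpr hμ).mul_mul_conjTranspose_same U
  have h0 := hpsd.dotProduct_mulVec_nonneg y
  simp only [star_trivial] at h0
  have hHy : y ⬝ᵥ ((H * H) *ᵥ y) = (H *ᵥ y) ⬝ᵥ (H *ᵥ y) := by
    rw [← mulVec_mulVec, dotProduct_mulVec, ← mulVec_transpose]
    congr 1
    rw [show Hᵀ = H from by simpa using hH.eq]
  rw [add_mulVec, dotProduct_add, smul_mulVec, dotProduct_smul, hHy] at h0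
  simpa [smul_eq_mul] using h0

lemma stepApply {d : ℕ} (H : Matrix (Fin d) (Fin d) ℝ) (a : ℝ) (k : Fin d) (v : Fin d → ℝ)
    (j : Fin d) :
    (((1 : Matrix (Fin d) (Fin d) ℝ) - a • (Matrix.single k k 1 * H)) *ᵥ v) j
      = v j - a * (if j = k then (H *ᵥ v) k else 0) := by
  rw [sub_mulVec, one_mulVec, smul_mulVec]
  simp only [Pi.sub_apply, Pi.smul_apply, smul_eq_mul]
  congr 1
  congr 1
  simp only [mulVec, dotProduct, Matrix.mul_apply, Matrix.single]
  by_cases h : j = k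
  · simp [h, Finset.mul_sum]
  · have h' : ¬ k = j := fun e => h e.symm
    simp [h, h']

lemma quadStep {d : ℕ} (H : Matrix (Fin d) (Fin d) ℝ) (hsymm : Hᵀ = H) (a : ℝ) (k : Fin d)
    (y y' : Fin d → ℝ) (hy' : ∀ j, y' j = y j - a * (if j = k then (H *ᵥ y) k else 0)) :
    y' ⬝ᵥ (H *ᵥ y') = y ⬝ᵥ (H *ᵥ y) - a * ((H *ᵥ y) k)^2 * (2 - a * H k k) := by
  set g : ℝ := (H *ᵥ y) k with hg
  have he : y' = y - (a * g) • (Pi.single k 1 : Fin d → ℝ) := by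
    funext j
    rw [hy' j]
    by_cases h : j = k <;> simp [h, Pi.single_apply, mul_comm]
  have hHe : y ⬝ᵥ (H *ᵥ Pi.single k 1) = g := by
    rw [dotProduct_mulVec, ← mulVec_transpose, hsymm, dotProduct_single, mul_one]
  have heH : Pi.single k (1:ℝ) ⬝ᵥ (H *ᵥ y) = g := by
    rw [single_dotProduct, one_mul]
  have heHe : Pi.single k (1:ℝ) ⬝ᵥ (H *ᵥ Pi.single k 1) = H k k := by
    rw [single_dotProduct, one_mul, mulVec_single]
    simp
  rw [he, mulVec_sub, mulVec_smul, sub_dotProduct, dotProduct_sub, dotProduct_sub,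
    smul_dotProduct, smul_dotProduct, dotProduct_smul, dotProduct_smul,
    hHe, heH, heHe]
  simp only [smul_eq_mul]
  ring

set_option maxHeartbeats 1000000 in
theorem stmt_5 {d m : ℕ} (hm : d ≤ m)
    (H : Matrix (Fin d) (Fin d) ℝ) (hH : H.IsHermitian)
    (hneg : ∃ j, hH.eigenvalues j < 0)
    (αmin αmax : ℝ) (hαmin : 0 < αmin) (hαle : αmin ≤ αmax)
    (hdiag : ∀ j, αmax * |H j j| < 1) :
    ∃ c : ℝ, c ∈ Set.Ioo (0 : ℝ) 1 ∧
      ∀ (α : ℕ → ℝ), (∀ t, α t ∈ Set.Icc αmin αmax) →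
      ∀ (i : ℕ → Fin d), (∀ j : Fin d, ∃ t, t < m ∧ i t = j) →
      ∀ (x : ℕ → Fin d → ℝ),
        (∀ t, x (t + 1) = ((1 : Matrix (Fin d) (Fin d) ℝ)
          - α t • (Matrix.single (i t) (i t) 1 * H)) *ᵥ x t) →
        (1 / 2) * (x 0 ⬝ᵥ (H *ᵥ x 0)) < 0 →
        (1 / 2) * (x m ⬝ᵥ (H *ᵥ x m)) ≤ (1 + c) * ((1 / 2) * (x 0 ⬝ᵥ (H *ᵥ x 0))) := by
  obtain ⟨j₀, hj₀⟩ := hneg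
  have hd : 0 < d := j₀.pos
  have hαmax : 0 < αmax := lt_of_lt_of_le hαmin hαle
  have hsymm : Hᵀ = H := by simpa using hH.eq
  have hne : (Finset.univ.filter (fun k => hH.eigenvalues k < 0)).Nonempty := ⟨j₀, by simp [hj₀]⟩
  set μ : ℝ := (Finset.univ.filter (fun k => hH.eigenvalues k < 0)).inf' hne
    (fun k => -hH.eigenvalues k) with hμdef
  have hμpos : 0 < μ := by
    rw [hμdef, Finset.lt_inf'_iff]
    intro k hk
    simp only [Finset.mem_filter] at hk
    linarith [hk.2]
  have hμk : ∀ k, 0 ≤ μ * hH.eigenvalues k + hH.eigenvalues k * hH.eigenvalues k := by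
    intro k
    rcases lt_or_ge (hH.eigenvalues k) 0 with h | h
    · have hle : μ ≤ -hH.eigenvalues k := Finset.inf'_le _ (by simp [h])
      nlinarith
    · nlinarith
  set M : ℝ := ∑ j : Fin d, ∑ k : Fin d, |H j k| with hMdef
  have hM0 : 0 ≤ M :=
    Finset.sum_nonneg fun _ _ => Finset.sum_nonneg fun _ _ => abs_nonneg _
  set B : ℝ := 1 + M * αmax with hBdef
  have hB1 : (1:ℝ) ≤ B := by nlinarith
  set D0 : ℝ := (d:ℝ) * m * B^2 with hD0def
  have hd1 : (1:ℝ) ≤ (d:ℝ) := by exact_mod_cast hd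
  have hm1 : (1:ℝ) ≤ (m:ℝ) := by exact_mod_cast hd.trans_le hm
  have hD0 : 0 < D0 := by
    have hB2 : (0:ℝ) < B^2 := by nlinarith
    rw [hD0def]
    exact mul_pos (mul_pos (by linarith) (by linarith)) hB2
  refine ⟨μ * αmin / (D0 + μ * αmin), ⟨by positivity, ?_⟩, ?_⟩
  · rw [div_lt_one (by positivity)]
    nlinarith
  intro α hα i hi x hx hf0
  set c : ℝ := μ * αmin / (D0 + μ * αmin) with hcdef
  have hQ0 : x 0 ⬝ᵥ (H *ᵥ x 0) < 0 := by linarith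
  have hstep : ∀ t j, x (t+1) j = x t j - α t * (if j = i t then (H *ᵥ x t) (i t) else 0) := by
    intro t j
    rw [hx t]
    exact stepApply H (α t) (i t) (x t) j
  have hdec : ∀ t, αmin * ((H *ᵥ x t) (i t))^2
      ≤ x t ⬝ᵥ (H *ᵥ x t) - x (t+1) ⬝ᵥ (H *ᵥ x (t+1)) := by
    intro t
    have hq := quadStep H hsymm (α t) (i t) (x t) (x (t+1)) (hstep t)
    have h1 := (hα t).1
    have h2 := (hα t).2
    have hαt : 0 < α t := lt_of_lt_of_le hαmin h1
    have hfac : 1 ≤ 2 - α t * H (i t) (i t) := by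
      have habs : α t * H (i t) (i t) ≤ α t * |H (i t) (i t)| :=
        mul_le_mul_of_nonneg_left (le_abs_self _) hαt.le
      have hle : α t * |H (i t) (i t)| ≤ αmax * |H (i t) (i t)| :=
        mul_le_mul_of_nonneg_right h2 (abs_nonneg _)
      have := hdiag (i t)
      linarith
    have hg2 : 0 ≤ ((H *ᵥ x t) (i t))^2 := sq_nonneg _
    nlinarith [mul_nonneg hαt.le hg2]
  have htel : αmin * (∑ t ∈ Finset.range m, ((H *ᵥ x t) (i t))^2)
      ≤ x 0 ⬝ᵥ (H *ᵥ x 0) - x m ⬝ᵥ (H *ᵥ x m) := by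
    rw [Finset.mul_sum, ← Finset.sum_range_sub' (fun t => x t ⬝ᵥ (H *ᵥ x t)) m]
    exact Finset.sum_le_sum fun t _ => hdec t
  set S : ℝ := ∑ t ∈ Finset.range m, ((H *ᵥ x t) (i t))^2 with hSdef
  set T : ℝ := ∑ t ∈ Finset.range m, |(H *ᵥ x t) (i t)| with hTdef
  have hS0 : 0 ≤ S := Finset.sum_nonneg fun _ _ => sq_nonneg _
  have hT0 : 0 ≤ T := Finset.sum_nonneg fun _ _ => abs_nonneg _
  have hdisp : ∀ t j, |x t j - x 0 j| ≤ αmax * ∑ s ∈ Finset.range t, |(H *ᵥ x s) (i s)| := by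
    intro t
    induction t with
    | zero => intro j; simp
    | succ t ih =>
      intro j
      rw [Finset.sum_range_succ, mul_add]
      have h1 : x (t+1) j - x 0 j
          = (x t j - x 0 j) - α t * (if j = i t then (H *ᵥ x t) (i t) else 0) := by
        rw [hstep t j]; ring
      have h2 : |α t * (if j = i t then (H *ᵥ x t) (i t) else 0)|
          ≤ αmax * |(H *ᵥ x t) (i t)| := by
        rw [abs_mul]
        have ha : |α t| ≤ αmax := by
          rw [abs_of_pos (lt_of_lt_of_le hαmin (hα t).1)]; exact (hα t).2
        have hb : |if j = i t then (H *ᵥ x t) (i t) else 0| ≤ |(H *ᵥ x t) (i t)| := by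
          by_cases h : j = i t <;> simp [h]
        exact mul_le_mul ha hb (abs_nonneg _) hαmax.le
      calc |x (t+1) j - x 0 j|
          ≤ |x t j - x 0 j| + |α t * (if j = i t then (H *ᵥ x t) (i t) else 0)| := by
            rw [h1]; exact abs_sub _ _
        _ ≤ αmax * ∑ s ∈ Finset.range t, |(H *ᵥ x s) (i s)| + αmax * |(H *ᵥ x t) (i t)| :=
            add_le_add (ih j) h2
  have hcoord : ∀ j, ((H *ᵥ x 0) j)^2 ≤ (B * T)^2 := by
    intro j
    obtain ⟨t, htm, hit⟩ := hi j
    have hgT : |(H *ᵥ x t) (i t)| ≤ T :=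
      Finset.single_le_sum (f := fun s => |(H *ᵥ x s) (i s)|) (fun s _ => abs_nonneg _)
        (Finset.mem_range.mpr htm)
    have hsub : ∑ s ∈ Finset.range t, |(H *ᵥ x s) (i s)| ≤ T :=
      Finset.sum_le_sum_of_subset_of_nonneg (Finset.range_subset_range.mpr htm.le)
        (fun s _ _ => abs_nonneg _)
    have hrow : ∑ k : Fin d, |H j k| ≤ M :=
      Finset.single_le_sum (f := fun j' => ∑ k : Fin d, |H j' k|)
        (fun j' _ => Finset.sum_nonneg fun _ _ => abs_nonneg _) (Finset.mem_univ j)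
    have hdiff : |(H *ᵥ x t) j - (H *ᵥ x 0) j| ≤ M * (αmax * T) := by
      have heq : (H *ᵥ x t) j - (H *ᵥ x 0) j = ∑ k : Fin d, H j k * (x t k - x 0 k) := by
        simp [mulVec, dotProduct, mul_sub, Finset.sum_sub_distrib]
      rw [heq]
      calc |∑ k : Fin d, H j k * (x t k - x 0 k)|
          ≤ ∑ k : Fin d, |H j k * (x t k - x 0 k)| := Finset.abs_sum_le_sum_abs _ _
        _ ≤ ∑ k : Fin d, |H j k| * (αmax * T) := by
            refine Finset.sum_le_sum fun k _ => ?_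
            rw [abs_mul]
            refine mul_le_mul_of_nonneg_left ?_ (abs_nonneg _)
            exact le_trans (hdisp t k) (mul_le_mul_of_nonneg_left hsub hαmax.le)
        _ = (∑ k : Fin d, |H j k|) * (αmax * T) := by rw [Finset.sum_mul]
        _ ≤ M * (αmax * T) := mul_le_mul_of_nonneg_right hrow (by positivity)
    have hg : |(H *ᵥ x t) j| = |(H *ᵥ x t) (i t)| := by rw [hit]
    have h3 : |(H *ᵥ x 0) j| ≤ B * T := by
      have habs : |(H *ᵥ x 0) j| ≤ |(H *ᵥ x t) j| + |(H *ᵥ x t) j - (H *ᵥ x 0) j| := by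
        have h4 := abs_sub ((H *ᵥ x t) j) ((H *ᵥ x t) j - (H *ᵥ x 0) j)
        have e : (H *ᵥ x t) j - ((H *ᵥ x t) j - (H *ᵥ x 0) j) = (H *ᵥ x 0) j := by ring
        rw [e] at h4
        exact h4
      rw [hg] at habs
      have : B * T = T + M * (αmax * T) := by rw [hBdef]; ring
      rw [this]
      linarith
    calc ((H *ᵥ x 0) j)^2 = |(H *ᵥ x 0) j|^2 := (sq_abs _).symm
      _ ≤ (B * T)^2 := pow_le_pow_left₀ (abs_nonneg _) h3 2
  have hT2 : T^2 ≤ (m : ℝ) * S := by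
    have := sq_sum_le_card_mul_sum_sq (s := Finset.range m)
      (f := fun t => |(H *ᵥ x t) (i t)|)
    simpa [sq_abs, Finset.card_range, hSdef, hTdef] using this
  have hsum2 : ∑ j : Fin d, ((H *ᵥ x 0) j)^2 ≤ D0 * S := by
    calc ∑ j : Fin d, ((H *ᵥ x 0) j)^2
        ≤ ∑ _j : Fin d, (B * T)^2 := Finset.sum_le_sum fun j _ => hcoord j
      _ = (d : ℝ) * (B * T)^2 := by
          rw [Finset.sum_const, Finset.card_fin, nsmul_eq_mul]
      _ = (d : ℝ) * B^2 * T^2 := by ring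
      _ ≤ (d : ℝ) * B^2 * ((m : ℝ) * S) := by
          refine mul_le_mul_of_nonneg_left hT2 ?_
          positivity
      _ = D0 * S := by rw [hD0def]; ring
  have hspec2 : 0 ≤ μ * (x 0 ⬝ᵥ (H *ᵥ x 0)) + ∑ j : Fin d, ((H *ᵥ x 0) j)^2 := by
    have h := specPSD H hH μ hμk (x 0)
    have hdp : (H *ᵥ x 0) ⬝ᵥ (H *ᵥ x 0) = ∑ j : Fin d, ((H *ᵥ x 0) j)^2 := by
      simp [dotProduct, sq]
    rw [hdp] at h
    exact h
  have hA : μ * (-(x 0 ⬝ᵥ (H *ᵥ x 0))) ≤ D0 * S := by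
    have := hspec2
    nlinarith
  have key : x m ⬝ᵥ (H *ᵥ x m) - x 0 ⬝ᵥ (H *ᵥ x 0) ≤ c * (x 0 ⬝ᵥ (H *ᵥ x 0)) := by
    rw [hcdef, div_mul_eq_mul_div, le_div_iff₀ (by positivity)]
    nlinarith [mul_le_mul_of_nonneg_left htel hD0.le, mul_le_mul_of_nonneg_left hA hαmin.le,
      mul_nonneg (mul_nonneg hμpos.le hαmin.le)
        (le_trans (mul_nonneg hαmin.le hS0) htel)]
  have hexp : (1 + c) * ((1/2) * (x 0 ⬝ᵥ (H *ᵥ x 0)))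
      = (1/2) * (x 0 ⬝ᵥ (H *ᵥ x 0)) + (1/2) * (c * (x 0 ⬝ᵥ (H *ᵥ x 0))) := by ring
  rw [hexp]
  linarith
end

section
/- Let H be symmetric d×d with λ_min(H) < 0, m ≥ d, and 0 < α_min ≤ α_max with α_max|H_{jj}| < 1 for all j. Consider blocks of m steps of the linear iteration x_{t+1} = (I − α_t e_{i_t} e_{i_t}ᵀ H)x_t with i.i.d. uniform coordinates. If x₀ satisfies f^H(x₀) < 0, and I_k is the indicator that block k covers all coordinates (i.e. {i_{km},...,i_{km+m−1}} = {1,...,d}), then f^H(x_{km}) ≤ (1+c)^{Σ_{j<k} I_j} f^H(x₀), and hence, since f^H is never increasing along the iteration, ‖x_{km}‖² ≥ (2/|λ_min(H)|)·|f^H(x₀)|·(1+c)^{Σ_{j<k} I_j}, where c ∈ (0,1) is the constant from the per-block decay estimate. -/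
open Matrix
theorem quad_lb {d : ℕ} (H : Matrix (Fin d) (Fin d) ℝ) (hH : H.IsHermitian)
    (lammin : ℝ) (hlam : IsLeast (Set.range hH.eigenvalues) lammin) (x : Fin d → ℝ) :
    lammin * (∑ j, x j ^ 2) ≤ x ⬝ᵥ (H *ᵥ x) := by
  set U : Matrix (Fin d) (Fin d) ℝ := (hH.eigenvectorUnitary : Matrix (Fin d) (Fin d) ℝ) with hU
  have hUU : U * star U = 1 := mem_unitaryGroup_iff.mp hH.eigenvectorUnitary.2
  set y : Fin d → ℝ := (star U) *ᵥ x with hy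
  have hnorm : ∑ j, y j ^ 2 = ∑ j, x j ^ 2 := by
    have h1 : y ⬝ᵥ y = x ⬝ᵥ x := by
      rw [hy, dotProduct_mulVec, ← mulVec_transpose, ← conjTranspose_eq_transpose_of_trivial,
        ← star_eq_conjTranspose, star_star, mulVec_mulVec, hUU, one_mulVec]
    simpa [dotProduct, sq] using h1
  have hquad : x ⬝ᵥ (H *ᵥ x) = ∑ j, hH.eigenvalues j * y j ^ 2 := by
    conv_lhs => rw [hH.spectral_theorem, Unitary.conjStarAlgAut_apply]
    rw [← mulVec_mulVec, ← mulVec_mulVec, dotProduct_mulVec, ← mulVec_transpose,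
      ← conjTranspose_eq_transpose_of_trivial, ← star_eq_conjTranspose, ← hy]
    simp only [dotProduct, mulVec_diagonal, Function.comp_apply, RCLike.ofReal_real_eq_id, id_eq, sq]
    exact Finset.sum_congr rfl fun _ _ => by ring
  rw [hquad, ← hnorm, Finset.mul_sum]
  refine Finset.sum_le_sum fun j _ => ?_
  exact mul_le_mul_of_nonneg_right (hlam.2 ⟨j, rfl⟩) (sq_nonneg _)
open Matrix
theorem step_dec {d : ℕ} (H : Matrix (Fin d) (Fin d) ℝ) (hH : H.IsHermitian)
    (a : ℝ) (ha : 0 < a) (j : Fin d) (hdj : a * |H j j| < 1) (v w : Fin d → ℝ)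
    (hw : w = ((1 : Matrix (Fin d) (Fin d) ℝ) - a • (Matrix.single j j 1 * H)) *ᵥ v) :
    w ⬝ᵥ (H *ᵥ w) ≤ v ⬝ᵥ (H *ᵥ v) := by
  set g : ℝ := (H *ᵥ v) j with hg
  have hsymm : ∀ k l, H k l = H l k := fun k l => by simpa using (hH.apply k l).symm
  have hcol : H *ᵥ (Pi.single j 1 : Fin d → ℝ) = fun k => H k j := by
    ext k; simp [mulVec_single]
  have hw' : w = v - (a * g) • (Pi.single j 1 : Fin d → ℝ) := by
    rw [hw]
    ext k
    simp only [sub_mulVec, one_mulVec, smul_mulVec, Pi.sub_apply, Pi.smul_apply,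
      smul_eq_mul]
    rcases eq_or_ne k j with rfl | hkj
    · simp only [mulVec, dotProduct, Matrix.single_mul_apply_same, one_mul,
        Pi.single_eq_same, hg]
      ring_nf
    · simp [mulVec, dotProduct, Matrix.single_mul_apply_of_ne (h := hkj),
        Pi.single_eq_of_ne hkj]
  have hcross : v ⬝ᵥ (H *ᵥ (Pi.single j 1 : Fin d → ℝ)) = g := by
    rw [hcol, hg]
    simp only [dotProduct, mulVec]
    exact Finset.sum_congr rfl fun l _ => by rw [hsymm l j]; ring
  have hcross2 : (Pi.single j (1:ℝ) : Fin d → ℝ) ⬝ᵥ (H *ᵥ v) = g := by simp [hg]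
  have hjj : (Pi.single j (1:ℝ) : Fin d → ℝ) ⬝ᵥ (H *ᵥ (Pi.single j 1 : Fin d → ℝ)) = H j j := by
    rw [hcol]; simp
  have expand : w ⬝ᵥ (H *ᵥ w) =
      v ⬝ᵥ (H *ᵥ v) - 2 * (a * g) * g + (a * g) ^ 2 * H j j := by
    rw [hw']
    simp only [mulVec_sub, mulVec_smul, dotProduct_sub, sub_dotProduct, dotProduct_smul,
      smul_dotProduct, smul_eq_mul, hcross, hcross2, hjj]
    ring
  have haH : a * H j j < 1 := lt_of_le_of_lt (mul_le_mul_of_nonneg_left (le_abs_self _) ha.le) hdj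
  rw [expand]
  nlinarith [sq_nonneg g, mul_nonneg ha.le (sq_nonneg g), ha, haH]

theorem stmt_19 {d m : ℕ} (hm : d ≤ m)
    (H : Matrix (Fin d) (Fin d) ℝ) (hH : H.IsHermitian)
    (lammin : ℝ) (hlam : IsLeast (Set.range hH.eigenvalues) lammin) (hneg : lammin < 0)
    (αmin αmax : ℝ) (hαmin : 0 < αmin) (hαle : αmin ≤ αmax)
    (hdiag : ∀ j, αmax * |H j j| < 1)
    (α : ℕ → ℝ) (hα : ∀ t, α t ∈ Set.Icc αmin αmax) (i : ℕ → Fin d)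
    (x : ℕ → Fin d → ℝ)
    (hrec : ∀ t, x (t + 1) = ((1 : Matrix (Fin d) (Fin d) ℝ)
      - α t • (Matrix.single (i t) (i t) 1 * H)) *ᵥ x t)
    (hx0 : (1 / 2) * (x 0 ⬝ᵥ (H *ᵥ x 0)) < 0)
    (Ind : ℕ → ℕ)
    (hInd : ∀ k, (Ind k = 0 ∨ Ind k = 1) ∧
      (Ind k = 1 ↔ ∀ j : Fin d, ∃ t, t < m ∧ i (k * m + t) = j))
    (c : ℝ) (hc : c ∈ Set.Ioo (0 : ℝ) 1)
    -- the per-block decay estimate with constant `c`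
    (hblock : ∀ t, (1 / 2) * (x t ⬝ᵥ (H *ᵥ x t)) < 0 →
      (∀ j : Fin d, ∃ s, s < m ∧ i (t + s) = j) →
      (1 / 2) * (x (t + m) ⬝ᵥ (H *ᵥ x (t + m))) ≤
        (1 + c) * ((1 / 2) * (x t ⬝ᵥ (H *ᵥ x t)))) :
    ∀ k : ℕ,
      (1 / 2) * (x (k * m) ⬝ᵥ (H *ᵥ x (k * m))) ≤
        (1 + c) ^ (∑ j ∈ Finset.range k, Ind j) * ((1 / 2) * (x 0 ⬝ᵥ (H *ᵥ x 0))) ∧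
      (2 / |lammin|) * |(1 / 2) * (x 0 ⬝ᵥ (H *ᵥ x 0))| *
          (1 + c) ^ (∑ j ∈ Finset.range k, Ind j) ≤ ∑ j, (x (k * m)) j ^ 2 := by
  have hc1 : (0:ℝ) < 1 + c := by linarith [hc.1]
  have hmono : ∀ t, (1/2) * (x (t+1) ⬝ᵥ (H *ᵥ x (t+1))) ≤ (1/2) * (x t ⬝ᵥ (H *ᵥ x t)) := by
    intro t
    have hat : 0 < α t := lt_of_lt_of_le hαmin (hα t).1
    have hatd : α t * |H (i t) (i t)| < 1 :=
      lt_of_le_of_lt (mul_le_mul_of_nonneg_right (hα t).2 (abs_nonneg _)) (hdiag (i t))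
    have := step_dec H hH (α t) hat (i t) hatd (x t) (x (t+1)) (hrec t)
    linarith
  have hmono2 : ∀ t r, (1/2) * (x (t+r) ⬝ᵥ (H *ᵥ x (t+r))) ≤ (1/2) * (x t ⬝ᵥ (H *ᵥ x t)) := by
    intro t r
    induction r with
    | zero => simp
    | succ n ih => exact le_trans (hmono (t+n)) ih
  have hnormb : ∀ n (P : ℝ), (1/2) * (x n ⬝ᵥ (H *ᵥ x n)) ≤ P * ((1/2) * (x 0 ⬝ᵥ (H *ᵥ x 0))) →
      (2 / |lammin|) * |(1/2) * (x 0 ⬝ᵥ (H *ᵥ x 0))| * P ≤ ∑ j, (x n) j ^ 2 := by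
    intro n P hle
    have hq := quad_lb H hH lammin hlam (x n)
    rw [abs_of_neg hneg, abs_of_neg hx0]
    rw [div_mul_eq_mul_div, div_mul_eq_mul_div, div_le_iff₀ (by linarith : (0:ℝ) < -lammin)]
    nlinarith [hq, hle]
  intro k
  induction k with
  | zero =>
    refine ⟨by simp, ?_⟩
    simpa using hnormb 0 1 (by simp)
  | succ k ih =>
    obtain ⟨ih1, ih2⟩ := ih
    have hPpos : (0:ℝ) < (1+c) ^ (∑ j ∈ Finset.range k, Ind j) := pow_pos hc1 _
    have hfk_neg : (1/2) * (x (k*m) ⬝ᵥ (H *ᵥ x (k*m))) < 0 :=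
      lt_of_le_of_lt ih1 (mul_neg_of_pos_of_neg hPpos hx0)
    have he : (k+1)*m = k*m + m := by ring
    have hstep : (1/2) * (x ((k+1)*m) ⬝ᵥ (H *ᵥ x ((k+1)*m))) ≤
        (1+c) ^ (Ind k) * ((1/2) * (x (k*m) ⬝ᵥ (H *ᵥ x (k*m)))) := by
      rcases (hInd k).1 with h0 | h1
      · rw [h0, pow_zero, one_mul, he]
        exact hmono2 (k*m) m
      · rw [h1, pow_one, he]
        exact hblock (k*m) hfk_neg ((hInd k).2.mp h1)
    have hsum : ∑ j ∈ Finset.range (k+1), Ind j = (∑ j ∈ Finset.range k, Ind j) + Ind k :=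
      Finset.sum_range_succ _ _
    have hfirst : (1/2) * (x ((k+1)*m) ⬝ᵥ (H *ᵥ x ((k+1)*m))) ≤
        (1+c) ^ (∑ j ∈ Finset.range (k+1), Ind j) * ((1/2) * (x 0 ⬝ᵥ (H *ᵥ x 0))) := by
      rw [hsum, pow_add, mul_comm ((1+c) ^ _) ((1+c) ^ Ind k), mul_assoc]
      exact hstep.trans (mul_le_mul_of_nonneg_left ih1 (pow_pos hc1 _).le)
    exact ⟨hfirst, hnormb ((k+1)*m) _ hfirst⟩
end
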